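/- Let r ≥ 1 and n ≥ 1. For each i = 1,…,n let W_•^i be a complete flag of subspaces 0 ⊊ W_1^i ⊊ W_2^i ⊊ ⋯ ⊊ W_{r-1}^i ⊊ ℂ^r with dim_ℂ W_j^i = j. Let Stab be the subgroup of SL_r(ℂ) consisting of all A such that A(W_j^i) = W_j^i for every i and j (where A acts on a subspace by taking its image). If Stab is finite, then every element of Stab is a scalar matrix ζ·I_r with ζ^r = 1; consequently Stab is isomorphic to the group of r-th roots of unity in ℂ. -/

import Mathlib

open Matrix Polynomial

/-- If an invertible matrix maps a finite-dimensional submodule into itself,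
it maps it onto itself. -/
private lemma flag_map_eq {r : ℕ} (M : Matrix (Fin r) (Fin r) ℂ) (hM : M.det ≠ 0)
    (W : Submodule ℂ (Fin r → ℂ)) (h : ∀ w ∈ W, M.toLin' w ∈ W) :
    W.map (Matrix.toLin' M) = W := by
  have hu : IsUnit M.det := isUnit_iff_ne_zero.2 hM
  have hinj : Function.Injective (Matrix.toLin' M) := by
    have hcomp : (Matrix.toLin' M⁻¹).comp (Matrix.toLin' M) = LinearMap.id := by
      rw [← Matrix.toLin'_mul, Matrix.nonsing_inv_mul M hu, Matrix.toLin'_one]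
    intro x y hxy
    have h2 := congrArg (Matrix.toLin' M⁻¹) hxy
    simp only [← LinearMap.comp_apply, hcomp, LinearMap.id_apply] at h2
    exact h2
  have hle : W.map (Matrix.toLin' M) ≤ W := by
    rintro x ⟨w, hw, rfl⟩; exact h w hw
  have hfr : Module.finrank ℂ (W.map (Matrix.toLin' M)) = Module.finrank ℂ W :=
    (Submodule.equivMapOfInjective _ hinj W).finrank_eq.symm
  exact Submodule.eq_of_le_of_finrank_le hle hfr.ge

/-- Lemma 5.2: if the stabilizer in `SL_r(ℂ)` of an `n`-tuple of complete flags of `ℂ^r`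
is finite, then every element of it is a scalar matrix `ζ • 1` with `ζ^r = 1`, and the
stabilizer is isomorphic to the group of `r`-th roots of unity. -/
theorem stmt_0 (r n : ℕ) (hr : 1 ≤ r) (hn : 1 ≤ n)
    (W : Fin n → ℕ → Submodule ℂ (Fin r → ℂ))
    (hmono : ∀ i : Fin n, ∀ j, j < r → W i j ≤ W i (j + 1))
    (hdim : ∀ i : Fin n, ∀ j, j ≤ r → Module.finrank ℂ (W i j) = j)
    (Stab : Subgroup (Matrix.SpecialLinearGroup (Fin r) ℂ))
    (hStab : ∀ A : Matrix.SpecialLinearGroup (Fin r) ℂ,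
      A ∈ Stab ↔ ∀ i : Fin n, ∀ j, 1 ≤ j → j ≤ r - 1 →
        (W i j).map (Matrix.toLin' (A : Matrix (Fin r) (Fin r) ℂ)) = W i j)
    (hfin : Finite Stab) :
    (∀ A ∈ Stab, ∃ ζ : ℂ, ζ ^ r = 1 ∧
      (A : Matrix (Fin r) (Fin r) ℂ) = ζ • (1 : Matrix (Fin r) (Fin r) ℂ)) ∧
    Nonempty (Stab ≃* rootsOfUnity r ℂ) := by
  have hrpos : 0 < r := hr
  have e0 : Fin r := ⟨0, hrpos⟩
  -- a convenient membership criterion for Stab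
  have memStab : ∀ B : Matrix (Fin r) (Fin r) ℂ, (hB : B.det = 1) →
      (∀ i : Fin n, ∀ j, 1 ≤ j → j ≤ r - 1 → ∀ w ∈ W i j, B.toLin' w ∈ W i j) →
      (⟨B, hB⟩ : Matrix.SpecialLinearGroup (Fin r) ℂ) ∈ Stab := by
    intro B hB hBW
    refine (hStab ⟨B, hB⟩).2 ?_
    intro i j h1 h2
    exact flag_map_eq B (by rw [hB]; exact one_ne_zero) _ (hBW i j h1 h2)
  -- Step 1: every element of Stab is scalar
  have key : ∀ A ∈ Stab, ∃ ζ : ℂ, ζ ^ r = 1 ∧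
      (A : Matrix (Fin r) (Fin r) ℂ) = ζ • (1 : Matrix (Fin r) (Fin r) ℂ) := by
    intro A hA
    set M : Matrix (Fin r) (Fin r) ℂ := (A : Matrix (Fin r) (Fin r) ℂ) with hMdef
    have hdetM : M.det = 1 := A.2
    have hMW : ∀ i : Fin n, ∀ j, 1 ≤ j → j ≤ r - 1 → ∀ w ∈ W i j, M.toLin' w ∈ W i j := by
      intro i j h1 h2 w hw
      have hmap := (hStab A).1 hA i j h1 h2
      rw [← hmap]
      exact Submodule.mem_map_of_mem hw
    have hscalar : ∃ ζ : ℂ, M = ζ • (1 : Matrix (Fin r) (Fin r) ℂ) := by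
      by_contra hns
      push_neg at hns
      -- the set of good parameters is infinite
      set q : ℂ[X] := ((1 : Matrix (Fin r) (Fin r) ℂ[X]) + (X : ℂ[X]) • M.map C).det with hq
      have heval : ∀ t : ℂ, q.eval t = (1 + t • M).det := by
        intro t
        have hmapmat : ((1 : Matrix (Fin r) (Fin r) ℂ[X]) + (X : ℂ[X]) • M.map C).map
            (evalRingHom t) = 1 + t • M := by
          ext i j
          simp only [Matrix.map_apply, Matrix.add_apply, Matrix.smul_apply, smul_eq_mul,
            coe_evalRingHom, eval_add, eval_mul, eval_X, eval_C, Matrix.one_apply,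
            apply_ite (eval t), eval_one, eval_zero]
        calc q.eval t = (evalRingHom t) q := rfl
          _ = (((1 : Matrix (Fin r) (Fin r) ℂ[X]) + (X : ℂ[X]) • M.map C).map
                (evalRingHom t)).det := (evalRingHom t).map_det _
          _ = (1 + t • M).det := by rw [hmapmat]
      have hq0 : q ≠ 0 := by
        intro h0
        have h1 : q.eval 0 = 1 := by
          rw [heval 0]; simp
        rw [h0] at h1; simp at h1
      have hSinf : {t : ℂ | (1 + t • M).det ≠ 0}.Infinite := by
        have hfin' := Polynomial.finite_setOf_isRoot hq0
        have : {t : ℂ | IsRoot q t}ᶜ ⊆ {t : ℂ | (1 + t • M).det ≠ 0} := by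
          intro t ht
          simp only [Set.mem_compl_iff, Set.mem_setOf_eq, IsRoot] at ht ⊢
          rw [← heval t]; exact ht
        exact (hfin'.infinite_compl).mono this
      -- choose r-th roots
      have hc : ∀ t : ℂ, ∃ c : ℂ, c ^ r = ((1 + t • M).det)⁻¹ := fun t =>
        IsAlgClosed.exists_pow_nat_eq _ hrpos
      choose c hcspec using hc
      -- for good t, build an element of Stab
      have hdet : ∀ t : ℂ, (1 + t • M).det ≠ 0 → (c t • (1 + t • M)).det = 1 := by
        intro t ht
        rw [Matrix.det_smul, Fintype.card_fin, hcspec t, inv_mul_cancel₀ ht]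
      have hmem : ∀ t : ℂ, (ht : (1 + t • M).det ≠ 0) →
          (⟨c t • (1 + t • M), hdet t ht⟩ : Matrix.SpecialLinearGroup (Fin r) ℂ) ∈ Stab := by
        intro t ht
        apply memStab
        intro i j h1 h2 w hw
        have hMw : M.toLin' w ∈ W i j := hMW i j h1 h2 w hw
        have : (c t • (1 + t • M)).toLin' w = c t • (w + t • M.toLin' w) := by
          simp [Matrix.toLin'_one]
        rw [this]
        exact Submodule.smul_mem _ _ (Submodule.add_mem _ hw (Submodule.smul_mem _ _ hMw))
      -- injection from the good set into Stab
      set S := {t : ℂ | (1 + t • M).det ≠ 0} with hS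
      let F : S → Stab := fun t =>
        ⟨⟨c t.1 • (1 + t.1 • M), hdet t.1 t.2⟩, hmem t.1 t.2⟩
      have hcne : ∀ t : ℂ, (1 + t • M).det ≠ 0 → c t ≠ 0 := by
        intro t ht h0
        have h := hcspec t
        rw [h0, zero_pow hrpos.ne'] at h
        exact ht (by rw [← inv_inv ((1 + t • M).det), ← h]; simp)
      have hFinj : Function.Injective F := by
        intro t s hts
        have hmat : c t.1 • (1 + t.1 • M) = c s.1 • (1 + s.1 • M) := by
          have := congrArg (fun x : Stab => ((x : Matrix.SpecialLinearGroup (Fin r) ℂ) :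
            Matrix (Fin r) (Fin r) ℂ)) hts
          simpa [F] using this
        have h1 : c t.1 • (1 : Matrix (Fin r) (Fin r) ℂ) + (c t.1 * t.1) • M
            = c s.1 • 1 + (c s.1 * s.1) • M := by
          calc c t.1 • (1 : Matrix (Fin r) (Fin r) ℂ) + (c t.1 * t.1) • M
              = c t.1 • (1 + t.1 • M) := by rw [smul_add, smul_smul]
            _ = c s.1 • (1 + s.1 • M) := hmat
            _ = c s.1 • 1 + (c s.1 * s.1) • M := by rw [smul_add, smul_smul]
        have h2 : (c t.1 * t.1 - c s.1 * s.1) • M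
            = (c s.1 - c t.1) • (1 : Matrix (Fin r) (Fin r) ℂ) := by
          rw [sub_smul, sub_smul, sub_eq_sub_iff_add_eq_add, add_comm]
          exact h1
        have h3 : c t.1 * t.1 = c s.1 * s.1 := by
          by_contra h3
          have hne : c t.1 * t.1 - c s.1 * s.1 ≠ 0 := sub_ne_zero.2 h3
          apply hns ((c t.1 * t.1 - c s.1 * s.1)⁻¹ * (c s.1 - c t.1))
          rw [← smul_smul, ← h2, smul_smul, inv_mul_cancel₀ hne, one_smul]
        have h4 : c t.1 = c s.1 := by
          rw [h3, sub_self, zero_smul] at h2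
          have h5 := congrFun (congrFun h2.symm e0) e0
          simp only [Matrix.smul_apply, Matrix.one_apply_eq, smul_eq_mul, mul_one,
            Matrix.zero_apply] at h5
          exact (sub_eq_zero.1 h5).symm
        have h6 : t.1 = s.1 := by
          rw [h4] at h3
          exact mul_left_cancel₀ (hcne s.1 s.2) h3
        exact Subtype.ext h6
      have : Finite S := Finite.of_injective F hFinj
      rw [Set.finite_coe_iff] at this
      exact hSinf this
    obtain ⟨ζ, hζ⟩ := hscalar
    refine ⟨ζ, ?_, hζ⟩
    have : (ζ • (1 : Matrix (Fin r) (Fin r) ℂ)).det = 1 := by rw [← hζ]; exact hdetM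
    rwa [Matrix.det_smul, Fintype.card_fin, Matrix.det_one, mul_one] at this
  refine ⟨key, ?_⟩
  -- Step 2: the isomorphism
  have hpowdet : ∀ ζ : ℂ, ζ ^ r = 1 → (ζ • (1 : Matrix (Fin r) (Fin r) ℂ)).det = 1 := by
    intro ζ hζ
    rw [Matrix.det_smul, Fintype.card_fin, Matrix.det_one, mul_one, hζ]
  have hscalarMem : ∀ ζ : ℂ, (hζ : ζ ^ r = 1) →
      (⟨ζ • 1, hpowdet ζ hζ⟩ : Matrix.SpecialLinearGroup (Fin r) ℂ) ∈ Stab := by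
    intro ζ hζ
    apply memStab
    intro i j h1 h2 w hw
    have : (ζ • (1 : Matrix (Fin r) (Fin r) ℂ)).toLin' w = ζ • w := by
      simp [Matrix.toLin'_one]
    rw [this]
    exact Submodule.smul_mem _ _ hw
  have hupow : ∀ u : rootsOfUnity r ℂ, ((u : ℂˣ) : ℂ) ^ r = 1 := by
    intro u
    have := (mem_rootsOfUnity r (u : ℂˣ)).1 u.2
    have := congrArg (Units.val) this
    simpa using this
  let ψ : rootsOfUnity r ℂ →* Stab :=
    MonoidHom.mk' (fun u => ⟨⟨((u : ℂˣ) : ℂ) • 1, hpowdet _ (hupow u)⟩,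
      hscalarMem _ (hupow u)⟩)
      (by
        intro u v
        apply Subtype.ext
        apply Subtype.ext
        show (((u * v : rootsOfUnity r ℂ) : ℂˣ) : ℂ) • (1 : Matrix (Fin r) (Fin r) ℂ)
          = (((u : ℂˣ) : ℂ) • 1) * (((v : ℂˣ) : ℂ) • 1)
        rw [Matrix.smul_mul, Matrix.mul_smul, one_mul, smul_smul]
        push_cast
        ring_nf)
  have hbij : Function.Bijective ψ := by
    constructor
    · intro u v huv
      have hmat : (((u : ℂˣ) : ℂ)) • (1 : Matrix (Fin r) (Fin r) ℂ)
          = (((v : ℂˣ) : ℂ)) • 1 := by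
        have := congrArg (fun x : Stab => ((x : Matrix.SpecialLinearGroup (Fin r) ℂ) :
          Matrix (Fin r) (Fin r) ℂ)) huv
        simpa [ψ] using this
      have := congrFun (congrFun hmat e0) e0
      simp only [Matrix.smul_apply, Matrix.one_apply_eq, smul_eq_mul, mul_one] at this
      exact Subtype.ext (Units.ext this)
    · rintro ⟨A, hA⟩
      obtain ⟨ζ, hζr, hζA⟩ := key A hA
      have hζ0 : ζ ≠ 0 := by
        intro h0
        rw [h0, zero_pow hrpos.ne'] at hζr
        exact zero_ne_one hζr
      refine ⟨⟨Units.mk0 ζ hζ0, ?_⟩, ?_⟩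
      · rw [mem_rootsOfUnity]
        ext
        push_cast
        simpa using hζr
      · apply Subtype.ext
        apply Subtype.ext
        show ζ • (1 : Matrix (Fin r) (Fin r) ℂ) = (A : Matrix (Fin r) (Fin r) ℂ)
        exact hζA.symm
  exact ⟨(MulEquiv.ofBijective ψ hbij).symm⟩
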